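/- arXiv:1603.09617 — 3 statements merged into one kernel-verified Lean document; each statement's English description precedes it below -/
import Mathlib

section
/- Let H be a hypergraph, let M and h be sets of nodes of H with M ⊆ h, and let C be an [M]-component of H with h ∩ C = ∅. Then C is an [h]-component of H. -/
/-! Common definitions: hypergraphs, components, the Robber and Captain game,
the Robber and Marshal game, tree projections, (generalized) hypertree decompositions. -/

variable {α : Type} [DecidableEq α]

/-- A hypergraph: a finite set of nodes and a finite set of hyperedges, each a subset of the
nodes, such that every node occurs in some hyperedge. -/
structure FinHypergraph (α : Type) [DecidableEq α] where
  nodes : Finset α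
  edges : Finset (Finset α)
  edge_sub : ∀ h ∈ edges, h ⊆ nodes
  cover : ∀ x ∈ nodes, ∃ h ∈ edges, x ∈ h

namespace FinHypergraph

/-- `X` and `Y` are `[M]`-adjacent: some hyperedge `h` satisfies `{X,Y} ⊆ h \ M`. -/
def MAdj (H : FinHypergraph α) (M : Finset α) (X Y : α) : Prop :=
  ∃ h ∈ H.edges, X ∈ h ∧ Y ∈ h ∧ X ∉ M ∧ Y ∉ M

/-- An `[M]`-path: a sequence of consecutively `[M]`-adjacent nodes. -/
def MPath (H : FinHypergraph α) (M : Finset α) : α → α → Prop :=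
  Relation.ReflTransGen (H.MAdj M)

/-- `W` is `[M]`-connected: every two nodes of `W` are joined by an `[M]`-path. -/
def MConn (H : FinHypergraph α) (M W : Finset α) : Prop :=
  ∀ X ∈ W, ∀ Y ∈ W, H.MPath M X Y

/-- `C` is an `[M]`-component: a maximal `[M]`-connected nonempty subset of `nodes(H) \ M`. -/
def MComp (H : FinHypergraph α) (M C : Finset α) : Prop :=
  C.Nonempty ∧ C ⊆ H.nodes \ M ∧ H.MConn M C ∧
    ∀ C' : Finset α, C ⊆ C' → C' ⊆ H.nodes \ M → H.MConn M C' → C' = C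

/-- The frontier `Fr(C)`: the union of all hyperedges of `H` meeting `C`. -/
def Fr (H : FinHypergraph α) (C : Finset α) : Finset α :=
  (H.edges.filter fun h => (h ∩ C).Nonempty).sup id

/-- The border `∂C = Fr(C) \ C`. -/
def border (H : FinHypergraph α) (C : Finset α) : Finset α := H.Fr C \ C

/-- `H1 ≤ H2`: every hyperedge of `H1` is contained in some hyperedge of `H2`. -/
def HLE (H1 H2 : FinHypergraph α) : Prop := ∀ h ∈ H1.edges, ∃ h' ∈ H2.edges, h ⊆ h'

/-- `H` is acyclic iff it has a join tree: a tree on the hyperedges of `H` such that, for every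
node `X`, the set of hyperedges containing `X` induces a connected subtree. -/
def IsAcyclicHG (H : FinHypergraph α) : Prop :=
  ∃ T : SimpleGraph {h : Finset α // h ∈ H.edges},
    T.IsTree ∧ ∀ X ∈ H.nodes,
      (T.induce {e : {h : Finset α // h ∈ H.edges} | X ∈ e.1}).Connected

/-- `H^k`: the hypergraph over the same nodes whose hyperedges are all unions of at most `k`
(and at least one) hyperedges of `H`. -/
def pow (H : FinHypergraph α) (k : ℕ) (hk : 1 ≤ k) : FinHypergraph α where
  nodes := H.nodes
  edges := (H.edges.powerset.filter fun S => S.Nonempty ∧ S.card ≤ k).image fun S => S.sup id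
  edge_sub := by
    intro h hh
    simp only [Finset.mem_image, Finset.mem_filter, Finset.mem_powerset] at hh
    obtain ⟨S, ⟨hS, _, _⟩, rfl⟩ := hh
    exact Finset.sup_le fun i hi => H.edge_sub i (hS hi)
  cover := by
    intro x hx
    obtain ⟨h, hh, hxh⟩ := H.cover x hx
    refine ⟨h, ?_, hxh⟩
    simp only [Finset.mem_image, Finset.mem_filter, Finset.mem_powerset]
    exact ⟨{h}, ⟨Finset.singleton_subset_iff.mpr hh, Finset.singleton_nonempty h,
      by simpa using hk⟩, by simp⟩

/-- The simplicial version of `H`: same nodes, and hyperedges all nonempty subsets of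
hyperedges of `H`. -/
def simplicial (H : FinHypergraph α) : FinHypergraph α where
  nodes := H.nodes
  edges := (H.edges.biUnion Finset.powerset).filter fun s => s.Nonempty
  edge_sub := by
    intro h hh
    simp only [Finset.mem_filter, Finset.mem_biUnion, Finset.mem_powerset] at hh
    obtain ⟨⟨e, he, hsub⟩, -⟩ := hh
    exact hsub.trans (H.edge_sub e he)
  cover := by
    intro x hx
    obtain ⟨h, hh, hxh⟩ := H.cover x hx
    refine ⟨h, ?_, hxh⟩
    simp only [Finset.mem_filter, Finset.mem_biUnion, Finset.mem_powerset]
    exact ⟨⟨h, hh, le_refl _⟩, ⟨x, hxh⟩⟩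

end FinHypergraph

/-- A tree projection of `H1` with respect to `H2`: an acyclic hypergraph `Ha` over the nodes
of `H1` with `H1 ≤ Ha ≤ H2`. -/
def IsTreeProjection (Ha H1 H2 : FinHypergraph α) : Prop :=
  Ha.nodes = H1.nodes ∧ Ha.IsAcyclicHG ∧ FinHypergraph.HLE H1 Ha ∧ FinHypergraph.HLE Ha H2

def HasTreeProjection (H1 H2 : FinHypergraph α) : Prop := ∃ Ha, IsTreeProjection Ha H1 H2

/-! ### The Robber and Captain game -/

/-- A configuration `(h, M, C)`. -/
abbrev Config (α : Type) := Finset α × Finset α × Finset α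

/-- The initial configuration `(∅, ∅, nodes(H1))`. -/
def initConfig (H1 : FinHypergraph α) : Config α := (∅, ∅, H1.nodes)

/-- `Cr` is a `[v, Mr]`-option: an `[Mr]`-component `Cr` of `H1` such that `C ∪ Cr` is
`[M ∩ Mr]`-connected, where `v = (h, M, C)`. -/
def IsOption (H1 : FinHypergraph α) (v : Config α) (Mr Cr : Finset α) : Prop :=
  H1.MComp Mr Cr ∧ H1.MConn (v.2.1 ∩ Mr) (v.2.2 ∪ Cr)

/-- The successor relation of the strategy graph (arcs from a configuration in the domain to the
configurations resulting from the Captain's move and the Robber's choice of an option). -/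
def StratSucc (H1 : FinHypergraph α) (dom : Set (Config α))
    (mv : Config α → Finset α × Finset α) (a b : Config α) : Prop :=
  a ∈ dom ∧ b.1 = (mv a).1 ∧ b.2.1 = (mv a).2 ∧ IsOption H1 a (mv a).2 b.2.2

/-- A strategy for the Captain in the Robber and Captain game on `(H1, H2)`. -/
structure Strategy (H1 H2 : FinHypergraph α) where
  dom : Set (Config α)
  move : Config α → Finset α × Finset α
  init_mem : initConfig H1 ∈ dom
  valid : ∀ v ∈ dom, v = initConfig H1 ∨
    (v.1 ∈ H2.edges ∧ v.2.1 ⊆ v.1 ∧ H1.MComp v.2.1 v.2.2)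
  move_edge : ∀ v ∈ dom, (move v).1 ∈ H2.edges
  move_sub : ∀ v ∈ dom, (move v).2 ⊆ (move v).1 ∩ H1.Fr v.2.2
  closed : ∀ v ∈ dom, ∀ Cr : Finset α,
    IsOption H1 v (move v).2 Cr → ((move v).1, (move v).2, Cr) ∈ dom
  reach : ∀ v ∈ dom, Relation.ReflTransGen (StratSucc H1 dom move) (initConfig H1) v

namespace Strategy

variable {H1 H2 : FinHypergraph α}

/-- The arc relation of the strategy graph `G(σ)`. -/
def Succ (σ : Strategy H1 H2) : Config α → Config α → Prop :=
  StratSucc H1 σ.dom σ.move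

/-- `σ` is winning iff its strategy graph is acyclic. -/
def Winning (σ : Strategy H1 H2) : Prop :=
  ∀ v : Config α, ¬ Relation.TransGen σ.Succ v v

/-- `σ` is monotone: every move is monotone, i.e. every option shrinks the component. -/
def IsMonotone (σ : Strategy H1 H2) : Prop :=
  ∀ v ∈ σ.dom, ∀ Cr : Finset α, IsOption H1 v (σ.move v).2 Cr → Cr ⊆ v.2.2

/-- `σ` is greedy: at `v = (h_p, M_p, C_p)` the move `(h_r, M_r)` satisfies
`M_r = h_r ∩ Fr(C_p)`, with `h_r = h_p` whenever `h_p ∩ C_p ≠ ∅` (otherwise `h_r` is an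
arbitrary hyperedge of `H2`, which is guaranteed by `move_edge`). -/
def Greedy (σ : Strategy H1 H2) : Prop :=
  ∀ v ∈ σ.dom, (σ.move v).2 = (σ.move v).1 ∩ H1.Fr v.2.2 ∧
    ((v.1 ∩ v.2.2).Nonempty → (σ.move v).1 = v.1)

/-- `σ` is nice: `σ(h_p, M_p, C_p) = (h_p, ∂C_p)` whenever `∂C_p ⊂ M_p`. -/
def Nice (σ : Strategy H1 H2) : Prop :=
  ∀ v ∈ σ.dom, H1.border v.2.2 ⊂ v.2.1 → σ.move v = (v.1, H1.border v.2.2)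

end Strategy

/-! ### The Robber and Marshal game -/

/-- A configuration `(h, C)` of the Robber and Marshal game. -/
abbrev MConfig (α : Type) := Finset α × Finset α

/-- The Robber's options in the Robber and Marshal game: `Cr` is an `[hr]`-component such that
`C ∪ Cr` is `[h ∩ hr]`-connected, where `v = (h, C)`. -/
def MarshalOption (H1 : FinHypergraph α) (v : MConfig α) (hr Cr : Finset α) : Prop :=
  H1.MComp hr Cr ∧ H1.MConn (v.1 ∩ hr) (v.2 ∪ Cr)

/-- The successor relation of the Robber and Marshal game under a given Marshal strategy. -/
def MarSucc (H1 : FinHypergraph α) (dom : Set (MConfig α)) (mv : MConfig α → Finset α)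
    (a b : MConfig α) : Prop :=
  a ∈ dom ∧ ¬ a.2 ⊆ a.1 ∧ b.1 = mv a ∧
    (MarshalOption H1 a (mv a) b.2 ∨
      ((¬ ∃ Cr : Finset α, MarshalOption H1 a (mv a) Cr) ∧ b.2 = ∅))

/-- A strategy for the Marshal in the Robber and Marshal game on `(H1, H2)`.
A configuration `(h, C)` with `C ⊆ h` is a capture configuration; at any other configuration of
the domain the Marshal moves to a hyperedge of `H2`. -/
structure MarshalStrategy (H1 H2 : FinHypergraph α) where
  dom : Set (MConfig α)
  move : MConfig α → Finset α
  init_mem : (∅, H1.nodes) ∈ dom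
  valid : ∀ v ∈ dom, v = ((∅ : Finset α), H1.nodes) ∨
    (v.1 ∈ H2.edges ∧ (H1.MComp v.1 v.2 ∨ v.2 = ∅))
  move_edge : ∀ v ∈ dom, ¬ v.2 ⊆ v.1 → move v ∈ H2.edges
  closed : ∀ v ∈ dom, ¬ v.2 ⊆ v.1 → ∀ Cr : Finset α,
    MarshalOption H1 v (move v) Cr → (move v, Cr) ∈ dom
  closed_cap : ∀ v ∈ dom, ¬ v.2 ⊆ v.1 →
    (¬ ∃ Cr : Finset α, MarshalOption H1 v (move v) Cr) → ((move v, ∅) : MConfig α) ∈ dom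
  reach : ∀ v ∈ dom,
    Relation.ReflTransGen (MarSucc H1 dom move) ((∅ : Finset α), H1.nodes) v

namespace MarshalStrategy

variable {H1 H2 : FinHypergraph α}

/-- The Marshal wins: starting from the initial configuration the game always ends in a capture
configuration; equivalently, the game graph of the strategy is acyclic. -/
def Winning (μ : MarshalStrategy H1 H2) : Prop :=
  ∀ v : MConfig α, ¬ Relation.TransGen (MarSucc H1 μ.dom μ.move) v v

/-- The Marshal strategy is monotone: in every move, every available component shrinks. -/
def IsMonotone (μ : MarshalStrategy H1 H2) : Prop :=
  ∀ v ∈ μ.dom, ¬ v.2 ⊆ v.1 → ∀ Cr : Finset α, MarshalOption H1 v (μ.move v) Cr → Cr ⊆ v.2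

end MarshalStrategy

/-! ### Rooted trees and (generalized) hypertree decompositions -/

/-- A finite rooted tree, encoded by a parent function on `Fin (size+1)`. -/
structure RTree where
  size : ℕ
  parent : Fin (size + 1) → Fin (size + 1)
  root : Fin (size + 1)
  parent_root : parent root = root
  reach_root : ∀ v, ∃ m : ℕ, parent^[m] v = root

namespace RTree

/-- Adjacency in the rooted tree. -/
def Adj (T : RTree) (a b : Fin (T.size + 1)) : Prop :=
  a ≠ b ∧ (T.parent a = b ∨ T.parent b = a)

/-- A set of vertices induces a connected subtree. -/
def ConnIn (T : RTree) (S : Set (Fin (T.size + 1))) : Prop :=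
  ∀ a ∈ S, ∀ b ∈ S,
    Relation.ReflTransGen (fun x y => T.Adj x y ∧ x ∈ S ∧ y ∈ S) a b

/-- `q` is a vertex of the subtree rooted at `p` (i.e. a descendant of `p`). -/
def Desc (T : RTree) (p q : Fin (T.size + 1)) : Prop :=
  ∃ m : ℕ, T.parent^[m] q = p

end RTree

/-- A generalized hypertree decomposition of `H`. -/
structure GHDec (H : FinHypergraph α) where
  T : RTree
  chi : Fin (T.size + 1) → Finset α
  lam : Fin (T.size + 1) → Finset (Finset α)
  chi_sub : ∀ p, chi p ⊆ H.nodes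
  lam_sub : ∀ p, lam p ⊆ H.edges
  edge_cover : ∀ h ∈ H.edges, ∃ p, h ⊆ chi p
  conn : ∀ Y ∈ H.nodes, T.ConnIn {p | Y ∈ chi p}
  chi_cov : ∀ p, chi p ⊆ (lam p).sup id

namespace GHDec

variable {H : FinHypergraph α}

/-- The decomposition has width at most `k`. -/
def WidthLE (D : GHDec H) (k : ℕ) : Prop := ∀ p, (D.lam p).card ≤ k

/-- Condition (4) of hypertree decompositions: for every vertex `p`, the intersection of
`⋃ λ(p)` with `⋃_{q in the subtree rooted at p} χ(q)` is contained in `χ(p)`. -/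
def IsHD (D : GHDec H) : Prop :=
  ∀ p, ∀ x ∈ (D.lam p).sup id, (∃ q, D.T.Desc p q ∧ x ∈ D.chi q) → x ∈ D.chi p

end GHDec

/-- If `M ⊆ h` are sets of nodes of `H` and `C` is an `[M]`-component of `H` with
`h ∩ C = ∅`, then `C` is an `[h]`-component of `H`. -/
theorem mComp_of_disjoint {α : Type} [DecidableEq α] (H : FinHypergraph α)
    (M h C : Finset α) (hM : M ⊆ H.nodes) (hh : h ⊆ H.nodes) (hMh : M ⊆ h)
    (hC : H.MComp M C) (hdisj : h ∩ C = ∅) :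
    H.MComp h C := by
  obtain ⟨hne, hsub, hconn, hmax⟩ := hC
  -- closure: if X ∈ C and MAdj M X Y then Y ∈ C
  have hadj : ∀ X ∈ C, ∀ Y, H.MAdj M X Y → Y ∈ C := by
    intro X hX Y hXY
    obtain ⟨e, he, hXe, hYe, hXM, hYM⟩ := hXY
    have hYn : Y ∈ H.nodes \ M := Finset.mem_sdiff.mpr ⟨H.edge_sub e he hYe, hYM⟩
    have key : insert Y C = C := by
      apply hmax
      · exact Finset.subset_insert _ _
      · intro z hz
        rcases Finset.mem_insert.mp hz with rfl | hz
        · exact hYn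
        · exact hsub hz
      · intro A hA B hB
        have hAdjXY : H.MAdj M X Y := ⟨e, he, hXe, hYe, hXM, hYM⟩
        have hAdjYX : H.MAdj M Y X := ⟨e, he, hYe, hXe, hYM, hXM⟩
        rcases Finset.mem_insert.mp hA with hAY | hA' <;>
          rcases Finset.mem_insert.mp hB with hBY | hB'
        · rw [hAY, hBY]; exact Relation.ReflTransGen.refl
        · rw [hAY]; exact Relation.ReflTransGen.head hAdjYX (hconn X hX B hB')
        · rw [hBY]; exact (hconn A hA' X hX).tail hAdjXY
        · exact hconn A hA' B hB'
    rw [← key]; exact Finset.mem_insert_self _ _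
  have hclosed : ∀ X ∈ C, ∀ Y, H.MPath M X Y → Y ∈ C := by
    intro X hX Y hp
    induction hp with
    | refl => exact hX
    | tail _ hstep ih => exact hadj _ ih _ hstep
  have hnotinh : ∀ x ∈ C, x ∉ h := by
    intro x hx hxh
    have : x ∈ h ∩ C := Finset.mem_inter.mpr ⟨hxh, hx⟩
    simp [hdisj] at this
  refine ⟨hne, ?_, ?_, ?_⟩
  · intro x hx
    exact Finset.mem_sdiff.mpr ⟨(Finset.mem_sdiff.mp (hsub hx)).1, hnotinh x hx⟩
  · -- MConn h C: upgrade M-paths to h-paths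
    intro X hX Y hY
    have hp := hconn X hX Y hY
    -- strengthen: path stays in C
    clear hY
    induction hp with
    | refl => exact Relation.ReflTransGen.refl
    | @tail b c hpath hstep ih =>
      have hbC : b ∈ C := hclosed X hX b hpath
      have hcC : c ∈ C := hadj b hbC c hstep
      obtain ⟨e, he, hbe, hce, _, _⟩ := hstep
      exact ih.tail ⟨e, he, hbe, hce, hnotinh b hbC, hnotinh c hcC⟩
  · intro C' hCC' hC'sub hC'conn
    apply hmax C' hCC'
    · intro x hx
      have := Finset.mem_sdiff.mp (hC'sub hx)
      exact Finset.mem_sdiff.mpr ⟨this.1, fun hxM => this.2 (hMh hxM)⟩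
    · intro A hA B hB
      have := hC'conn A hA B hB
      refine Relation.ReflTransGen.mono ?_ _ _ this
      rintro x y ⟨e, he, hxe, hye, hxh, hyh⟩
      exact ⟨e, he, hxe, hye, fun hm => hxh (hMh hm), fun hm => hyh (hMh hm)⟩
end

section
/- Let H1 be a hypergraph, let h_p be a set of nodes, let M_p ⊆ h_p, and let C_p be an [M_p]-component of H1 with h_p ∩ C_p ≠ ∅. Set M_r = h_p ∩ Fr(C_p). Then every [M_r]-component C_r of H1 such that C_p ∪ C_r is [M_p ∩ M_r]-connected satisfies C_r ⊆ C_p, and moreover every such C_r is an [h_p]-component of H1. -/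
/-! Common definitions: hypergraphs, components, the Robber and Captain game,
the Robber and Marshal game, tree projections, (generalized) hypertree decompositions. -/

variable {α : Type} [DecidableEq α]

section Aux

variable {α : Type} [DecidableEq α]

lemma madj_symm' {H : FinHypergraph α} {M : Finset α} {x y : α} (h : H.MAdj M x y) :
    H.MAdj M y x := by
  obtain ⟨e, he, hx, hy, hxm, hym⟩ := h
  exact ⟨e, he, hy, hx, hym, hxm⟩

lemma mem_nodes_of_madj {H : FinHypergraph α} {M : Finset α} {x y : α} (h : H.MAdj M x y) :
    y ∈ H.nodes := by
  obtain ⟨e, he, _, hy, _, _⟩ := h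
  exact H.edge_sub e he hy

/-- Components are closed under `[M]`-adjacency. -/
lemma comp_closed {H : FinHypergraph α} {M C : Finset α} (hC : H.MComp M C)
    {w z : α} (hw : w ∈ C) (hadj : H.MAdj M w z) : z ∈ C := by
  obtain ⟨hne, hsub, hconn, hmax⟩ := hC
  have hzn : z ∈ H.nodes \ M := by
    obtain ⟨e, he, _, hye, _, hzm⟩ := hadj
    exact Finset.mem_sdiff.mpr ⟨H.edge_sub e he hye, hzm⟩
  have hins : insert z C ⊆ H.nodes \ M := by
    intro a ha
    rcases Finset.mem_insert.mp ha with rfl | ha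
    · exact hzn
    · exact hsub ha
  have hconn' : H.MConn M (insert z C) := by
    intro a ha b hb
    have step : ∀ c ∈ insert z C, Relation.ReflTransGen (H.MAdj M) c z := by
      intro c hc
      rcases Finset.mem_insert.mp hc with h | h
      · exact h ▸ Relation.ReflTransGen.refl
      · exact Relation.ReflTransGen.tail (hconn c h w hw) hadj
    rcases Finset.mem_insert.mp hb with h | h
    · exact h ▸ step a ha
    · rcases Finset.mem_insert.mp ha with h' | h'
      · subst h'
        exact Relation.ReflTransGen.trans
          (Relation.ReflTransGen.single (madj_symm' hadj)) (hconn w hw b h)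
      · exact hconn a h' b h
  have := hmax (insert z C) (Finset.subset_insert _ _) hins hconn'
  rw [← this]
  exact Finset.mem_insert_self _ _

lemma mem_Fr {H : FinHypergraph α} {C : Finset α} {e : Finset α} (he : e ∈ H.edges)
    {z : α} (hz : z ∈ e) (hmeet : (e ∩ C).Nonempty) : z ∈ H.Fr C := by
  unfold FinHypergraph.Fr
  have : e ∈ H.edges.filter fun h => (h ∩ C).Nonempty :=
    Finset.mem_filter.mpr ⟨he, hmeet⟩
  exact Finset.mem_sup.mpr ⟨e, this, hz⟩

end Aux

/-- Let `C_p` be an `[M_p]`-component with `M_p ⊆ h_p` and `h_p ∩ C_p ≠ ∅`, and let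
`M_r = h_p ∩ Fr(C_p)`. Then every `[M_r]`-component `C_r` such that `C_p ∪ C_r` is
`[M_p ∩ M_r]`-connected satisfies `C_r ⊆ C_p`, and every such `C_r` is an `[h_p]`-component. -/
theorem greedy_same_squad_components {α : Type} [DecidableEq α] (H1 : FinHypergraph α)
    (hp Mp Cp : Finset α) (hhp : hp ⊆ H1.nodes) (hMp : Mp ⊆ hp)
    (hCp : H1.MComp Mp Cp) (hint : (hp ∩ Cp).Nonempty)
    (Mr : Finset α) (hMr : Mr = hp ∩ H1.Fr Cp) :
    ∀ Cr : Finset α, H1.MComp Mr Cr → H1.MConn (Mp ∩ Mr) (Cp ∪ Cr) →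
      Cr ⊆ Cp ∧ H1.MComp hp Cr := by
  subst hMr
  intro Cr hCr hconn2
  -- Every [Mp ∩ Mr]-path starting in Cp stays in Cp.
  have key : ∀ y ∈ Cp, ∀ z, H1.MPath (Mp ∩ (hp ∩ H1.Fr Cp)) y z → z ∈ Cp := by
    intro y hy z hpath
    induction hpath with
    | refl => exact hy
    | tail _ hadj ih =>
      rename_i w z _
      obtain ⟨e, he, hwe, hze, hwm, hzm⟩ := hadj
      have hzFr : z ∈ H1.Fr Cp := mem_Fr he hze ⟨w, Finset.mem_inter.mpr ⟨hwe, ih⟩⟩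
      by_cases hzMp : z ∈ Mp
      · exact absurd (Finset.mem_inter.mpr ⟨hzMp,
          Finset.mem_inter.mpr ⟨hMp hzMp, hzFr⟩⟩) hzm
      · have hwMp : w ∉ Mp := (Finset.mem_sdiff.mp (hCp.2.1 ih)).2
        exact comp_closed hCp ih ⟨e, he, hwe, hze, hwMp, hzMp⟩
  obtain ⟨y, hy⟩ := hint
  have hyCp : y ∈ Cp := (Finset.mem_inter.mp hy).2
  have hCrCp : Cr ⊆ Cp := by
    intro x hx
    exact key y hyCp x
      (hconn2 y (Finset.mem_union_left _ hyCp) x (Finset.mem_union_right _ hx))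
  -- Cr avoids hp.
  have hCrhp : ∀ x ∈ Cr, x ∉ hp := by
    intro x hx hxhp
    have hxCp : x ∈ Cp := hCrCp hx
    have hxn : x ∈ H1.nodes := (Finset.mem_sdiff.mp (hCp.2.1 hxCp)).1
    obtain ⟨e, he, hxe⟩ := H1.cover x hxn
    have hxFr : x ∈ H1.Fr Cp := mem_Fr he hxe ⟨x, Finset.mem_inter.mpr ⟨hxe, hxCp⟩⟩
    have := (Finset.mem_sdiff.mp (hCr.2.1 hx)).2
    exact this (Finset.mem_inter.mpr ⟨hxhp, hxFr⟩)
  refine ⟨hCrCp, hCr.1, ?_, ?_, ?_⟩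
  · intro x hx
    exact Finset.mem_sdiff.mpr ⟨(Finset.mem_sdiff.mp (hCr.2.1 hx)).1, hCrhp x hx⟩
  · -- [hp]-connectedness: [Mr]-paths from Cr stay in Cr and avoid hp.
    intro a ha b hb
    have key2 : ∀ z, H1.MPath (hp ∩ H1.Fr Cp) a z → z ∈ Cr ∧ H1.MPath hp a z := by
      intro z hpath
      induction hpath with
      | refl => exact ⟨ha, Relation.ReflTransGen.refl⟩
      | tail _ hadj ih =>
        rename_i w z _
        have hzCr : z ∈ Cr := comp_closed hCr ih.1 hadj
        obtain ⟨e, he, hwe, hze, _, _⟩ := hadj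
        exact ⟨hzCr, Relation.ReflTransGen.tail ih.2
          ⟨e, he, hwe, hze, hCrhp w ih.1, hCrhp z hzCr⟩⟩
    exact (key2 b (hCr.2.2.1 a ha b hb)).2
  · -- maximality
    intro C' hsub hsub' hconn'
    apply hCr.2.2.2 C' hsub
    · intro x hx
      have := Finset.mem_sdiff.mp (hsub' hx)
      exact Finset.mem_sdiff.mpr ⟨this.1, fun hxm => this.2 (Finset.mem_inter.mp hxm).1⟩
    · intro a ha b hb
      refine Relation.ReflTransGen.mono (r := H1.MAdj hp) ?_ a b (hconn' a ha b hb)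
      intro x y hxy
      obtain ⟨e, he, hxe, hye, hxm, hym⟩ := hxy
      exact ⟨e, he, hxe, hye, fun h => hxm (Finset.mem_inter.mp h).1,
        fun h => hym (Finset.mem_inter.mp h).1⟩
end

section
/- Let H1 be a hypergraph, let C_p be an [M_p]-component of H1, let M_r ⊆ Fr(C_p), let C_r be an [M_r]-component of H1 such that C_p ∪ C_r is [M_p ∩ M_r]-connected, and let M_s ⊆ Fr(C_r). Define ED = (M_r ∩ Fr(C_r)) \ M_s, set M_r' = M_r \ ED, and let C_r' be the [M_r']-component of H1 containing C_r ∪ ED. Then a set C is an [M_s]-component of H1 such that C_r ∪ C is [M_r ∩ M_s]-connected if, and only if, C is an [M_s]-component of H1 such that C_r' ∪ C is [M_r' ∩ M_s]-connected. -/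
/-! Common definitions: hypergraphs, components, the Robber and Captain game,
the Robber and Marshal game, tree projections, (generalized) hypertree decompositions. -/

variable {α : Type} [DecidableEq α]

lemma mpath_mono (H1 : FinHypergraph α) {M M' : Finset α} (h : M ⊆ M') {X Y : α}
    (hp : H1.MPath M' X Y) : H1.MPath M X Y := by
  induction hp with
  | refl => exact Relation.ReflTransGen.refl
  | tail _ hadj ih =>
    obtain ⟨e, he, h1, h2, h3, h4⟩ := hadj
    exact ih.tail ⟨e, he, h1, h2, fun hm => h3 (h hm), fun hm => h4 (h hm)⟩

lemma mpath_symm (H1 : FinHypergraph α) {M : Finset α} {X Y : α}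
    (hp : H1.MPath M X Y) : H1.MPath M Y X := by
  refine (@Relation.ReflTransGen.stdSymm _ (H1.MAdj M) ⟨?_⟩).symm _ _ hp
  rintro a b ⟨e, he, h1, h2, h3, h4⟩
  exact ⟨e, he, h2, h1, h4, h3⟩

/-- Lemma, part (4): with `ED = (M_r ∩ Fr(C_r)) \ M_s`, `M_r' = M_r \ ED` and
`C_r'` the `[M_r']`-component containing `C_r ∪ ED`, a set `C` is an `[M_s]`-component with
`C_r ∪ C` being `[M_r ∩ M_s]`-connected iff `C` is an `[M_s]`-component with `C_r' ∪ C` being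
`[M_r' ∩ M_s]`-connected. -/
theorem options_after_unchanged {α : Type} [DecidableEq α] (H1 : FinHypergraph α)
    (Mp Cp Mr Cr Ms : Finset α)
    (hCp : H1.MComp Mp Cp) (hMr : Mr ⊆ H1.Fr Cp)
    (hCr : H1.MComp Mr Cr) (hc : H1.MConn (Mp ∩ Mr) (Cp ∪ Cr))
    (hMs : Ms ⊆ H1.Fr Cr)
    (ED Mr' Cr' : Finset α)
    (hED : ED = (Mr ∩ H1.Fr Cr) \ Ms) (hMr' : Mr' = Mr \ ED)
    (hCr' : H1.MComp Mr' Cr') (hsub : Cr ∪ ED ⊆ Cr') :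
    ∀ C : Finset α,
      (H1.MComp Ms C ∧ H1.MConn (Mr ∩ Ms) (Cr ∪ C)) ↔
        (H1.MComp Ms C ∧ H1.MConn (Mr' ∩ Ms) (Cr' ∪ C)) := by
  have hM : Mr' ∩ Ms = Mr ∩ Ms := by
    subst hMr' hED; ext x
    simp only [Finset.mem_inter, Finset.mem_sdiff, not_and, not_not]
    tauto
  have hMsub : Mr ∩ Ms ⊆ Mr' := by
    subst hMr' hED; intro x hx
    simp only [Finset.mem_inter] at hx
    simp only [Finset.mem_sdiff, Finset.mem_inter, not_and, not_not]
    exact ⟨hx.1, fun _ => hx.2⟩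
  have hCrsub : Cr ⊆ Cr' := fun x hx => hsub (Finset.mem_union_left _ hx)
  obtain ⟨x, hx⟩ := hCr.1
  have hx' : x ∈ Cr' := hCrsub hx
  intro C
  constructor
  · rintro ⟨hC, hconn⟩
    refine ⟨hC, ?_⟩
    rw [hM]
    have hCconn : ∀ a ∈ Cr' ∪ C, H1.MPath (Mr ∩ Ms) a x := by
      intro a ha
      rcases Finset.mem_union.mp ha with ha | ha
      · exact mpath_mono H1 hMsub (hCr'.2.2.1 a ha x hx')
      · exact mpath_symm H1 (hconn x (Finset.mem_union_left _ hx) a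
          (Finset.mem_union_right _ ha))
    intro a ha b hb
    exact (hCconn a ha).trans (mpath_symm H1 (hCconn b hb))
  · rintro ⟨hC, hconn⟩
    rw [hM] at hconn
    refine ⟨hC, fun a ha b hb => hconn a ?_ b ?_⟩
    · rcases Finset.mem_union.mp ha with h | h
      · exact Finset.mem_union_left _ (hCrsub h)
      · exact Finset.mem_union_right _ h
    · rcases Finset.mem_union.mp hb with h | h
      · exact Finset.mem_union_left _ (hCrsub h)
      · exact Finset.mem_union_right _ h
end
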